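/- Let c ∈ ℝ with c ≥ 0. Then {(y₁,y₂) ∈ ℝ² : −sin⁴θ·y₁ + cos⁴θ·y₂ ≤ c for all θ ∈ [0,π/2]} = {(y₁,y₂) ∈ ℝ² : y₁ ≥ −c and y₂ ≤ c}. -/
import Mathlib


open Real Set

theorem stmt_8 (c : ℝ) (hc : 0 ≤ c) :
    {y : ℝ × ℝ | ∀ θ ∈ Set.Icc (0 : ℝ) (π / 2),
        -(Real.sin θ ^ 4) * y.1 + Real.cos θ ^ 4 * y.2 ≤ c} =
      {y : ℝ × ℝ | -c ≤ y.1 ∧ y.2 ≤ c} := by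
  ext y
  simp only [Set.mem_setOf_eq]
  constructor
  · intro h
    have h1 := h (π / 2) ⟨by positivity, le_refl _⟩
    have h2 := h 0 ⟨le_refl _, by positivity⟩
    simp [Real.sin_pi_div_two, Real.cos_pi_div_two] at h1 h2
    constructor <;> linarith
  · rintro ⟨h1, h2⟩ θ _
    have hs4 : (0:ℝ) ≤ Real.sin θ ^ 4 := by positivity
    have hc4 : (0:ℝ) ≤ Real.cos θ ^ 4 := by positivity
    have key : Real.sin θ ^ 4 + Real.cos θ ^ 4 ≤ 1 := by
      have := Real.sin_sq_add_cos_sq θ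
      nlinarith [sq_nonneg (Real.sin θ * Real.cos θ)]
    nlinarith [mul_le_mul_of_nonneg_left (neg_le.mpr h1 : -y.1 ≤ c) hs4,
      mul_le_mul_of_nonneg_left h2 hc4]
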